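/- arXiv:1004.1298 — 11 statements merged into one kernel-verified Lean document; each statement's English description precedes it below -/
import Mathlib

section
/- If M is a simple NFA, then the DFA obtained from M by the subset construction, after removing states inaccessible from the start state, is a minimal DFA for the language of M. -/
open List Set

/-- The language of a state `q` of an NFA: strings leading from `q` to an accepting state. -/
def stateLang {α σ : Type} (M : NFA α σ) (q : σ) : Set (List α) :=
  {s | (M.evalFrom {q} s ∩ M.accept).Nonempty}

/-- A state is accessible if it is reachable from some start state on some string. -/
def Accessible {α σ : Type} (M : NFA α σ) (q : σ) : Prop := ∃ s : List α, q ∈ M.eval s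

/-- A simple NFA: all states accessible, all state languages nonempty and pairwise disjoint. -/
def IsSimple {α σ : Type} (M : NFA α σ) : Prop :=
  (∀ q : σ, Accessible M q) ∧ (∀ q : σ, (stateLang M q).Nonempty) ∧
  (∀ p q : σ, p ≠ q → Disjoint (stateLang M p) (stateLang M q))

/-- The automaton obtained by adding self-transitions (on every character) to all start states. -/
def loopNFA {α σ : Type} (M : NFA α σ) : NFA α σ where
  step q a := {x | x = q ∧ q ∈ M.start} ∪ M.step q a
  start := M.start
  accept := M.accept

lemma mem_evalFrom_iff {α σ : Type} (M : NFA α σ) (u : List α) (S : Set σ) (x : σ) :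
    x ∈ M.evalFrom S u ↔ ∃ q ∈ S, x ∈ M.evalFrom {q} u := by
  induction u generalizing S with
  | nil => simp [NFA.evalFrom]
  | cons a u ih =>
    have h1 : M.evalFrom S (a :: u) = M.evalFrom (M.stepSet S a) u := rfl
    rw [h1, ih]
    constructor
    · rintro ⟨p, hp, hx⟩
      rw [NFA.mem_stepSet] at hp
      obtain ⟨q, hq, hpq⟩ := hp
      refine ⟨q, hq, ?_⟩
      have h2 : M.evalFrom {q} (a :: u) = M.evalFrom (M.stepSet {q} a) u := rfl
      rw [h2, ih]
      refine ⟨p, ?_, hx⟩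
      rw [NFA.mem_stepSet]
      exact ⟨q, rfl, hpq⟩
    · rintro ⟨q, hq, hx⟩
      have h2 : M.evalFrom {q} (a :: u) = M.evalFrom (M.stepSet {q} a) u := rfl
      rw [h2, ih] at hx
      obtain ⟨p, hp, hx⟩ := hx
      rw [NFA.mem_stepSet] at hp
      obtain ⟨q', hq', hpq'⟩ := hp
      rw [Set.mem_singleton_iff] at hq'
      subst hq' 
      exact ⟨p, by rw [NFA.mem_stepSet]; exact ⟨_, hq, hpq'⟩, hx⟩

lemma nfa_evalFrom_append {α σ : Type} (M : NFA α σ) (S : Set σ) (s t : List α) :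
    M.evalFrom S (s ++ t) = M.evalFrom (M.evalFrom S s) t :=
  List.foldl_append

/-- The subset-construction DFA of a simple NFA, after removing inaccessible states,
is a minimal DFA for the language of the NFA: it recognizes the same language and no
DFA recognizing this language has fewer states than it has accessible states. -/
theorem subsetConstruction_of_simple_is_minimal {α σ : Type} [Fintype σ]
    (M : NFA α σ) (hM : IsSimple M) :
    M.toDFA.accepts = M.accepts ∧
    ∀ (σ' : Type) [Fintype σ'] (N : DFA α σ'), N.accepts = M.accepts →
      {S : Set σ | ∃ s : List α, M.toDFA.evalFrom M.toDFA.start s = S}.ncard ≤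
        Fintype.card σ' := by
  obtain ⟨hacc, hne, hdisj⟩ := hM
  refine ⟨M.toDFA_correct, ?_⟩
  intro σ' _ N hN
  set A := {S : Set σ | ∃ s : List α, M.toDFA.evalFrom M.toDFA.start s = S} with hA
  -- key fact
  have key : ∀ s t : List α, N.evalFrom N.start s = N.evalFrom N.start t →
      M.eval s = M.eval t := by
    suffices h : ∀ s t : List α, N.evalFrom N.start s = N.evalFrom N.start t →
        M.eval s ⊆ M.eval t by
      intro s t h'; exact (h s t h').antisymm (h t s h'.symm)
    intro s t h q hq
    obtain ⟨u, hu⟩ := hne q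
    obtain ⟨r, hr1, hr2⟩ := hu
    have hsu : s ++ u ∈ M.accepts := by
      refine ⟨r, hr2, ?_⟩
      show r ∈ M.evalFrom M.start (s ++ u)
      rw [nfa_evalFrom_append, mem_evalFrom_iff]
      exact ⟨q, hq, hr1⟩
    have htu : t ++ u ∈ M.accepts := by
      rw [← hN] at hsu ⊢
      rw [DFA.mem_accepts] at hsu ⊢
      have e1 : N.eval (s ++ u) = N.evalFrom (N.evalFrom N.start s) u :=
        DFA.evalFrom_of_append _ _ _ _
      have e2 : N.eval (t ++ u) = N.evalFrom (N.evalFrom N.start t) u :=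
        DFA.evalFrom_of_append _ _ _ _
      show N.eval (t ++ u) ∈ N.accept
      rw [e2, ← h, ← e1]
      exact hsu
    obtain ⟨r', hr'2, hr'1⟩ := htu
    have : r' ∈ M.evalFrom (M.eval t) u := by
      have : r' ∈ M.evalFrom M.start (t ++ u) := hr'1
      rwa [nfa_evalFrom_append] at this
    rw [mem_evalFrom_iff] at this
    obtain ⟨p, hp, hr'p⟩ := this
    by_cases hpq : p = q
    · exact hpq ▸ hp
    · exfalso
      have hup : u ∈ stateLang M p := ⟨r', hr'p, hr'2⟩
      have huq : u ∈ stateLang M q := ⟨r, hr1, hr2⟩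
      exact (hdisj p q hpq).ne_of_mem hup huq rfl
  -- injective map into σ'
  have hDFA : ∀ s : List α, M.toDFA.evalFrom M.toDFA.start s = M.eval s := fun _ => rfl
  classical
  set f : Set σ → σ' := fun S =>
    if h : S ∈ A then N.evalFrom N.start h.choose else N.start with hf
  have hinj : Set.InjOn f A := by
    intro S hS T hT hfe
    rw [hf] at hfe
    simp only [dif_pos hS, dif_pos hT] at hfe
    have h1 := hS.choose_spec
    have h2 := hT.choose_spec
    rw [← h1, ← h2, hDFA, hDFA]
    exact key _ _ hfe
  have := Set.ncard_le_ncard_of_injOn f (fun a _ => Set.mem_univ (f a)) hinj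
    Set.finite_univ
  rwa [Set.ncard_univ, Nat.card_eq_fintype_card] at this
end

section
/- Let M be a simple NFA such that no start state is reachable via a single transition from any other state (i.e., there are no σ ∈ Σ, q_α ∈ Q_α, q ∈ Q with q ≠ q_α and q_α ∈ Δ(q, σ)). Then the automaton M_⟲ obtained by adding a self-transition on every character to each start state is also simple. -/
open List Set

namespace LoopAux

variable {α σ : Type}

theorem mem_evalFrom_iff (N : NFA α σ) (q : σ) :
    ∀ (s : List α) (S : Set σ), q ∈ N.evalFrom S s ↔ ∃ r ∈ S, q ∈ N.evalFrom {r} s := by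
  intro s
  induction s with
  | nil => intro S; simp [NFA.evalFrom]
  | cons a s ih =>
    intro S
    have e : ∀ T : Set σ, N.evalFrom T (a :: s) = N.evalFrom (N.stepSet T a) s := fun _ => rfl
    rw [e, ih]
    constructor
    · rintro ⟨r, hr, hq⟩
      rw [NFA.mem_stepSet] at hr
      obtain ⟨w, hw, hr⟩ := hr
      refine ⟨w, hw, ?_⟩
      rw [e, ih]
      exact ⟨r, by rw [NFA.mem_stepSet]; exact ⟨w, rfl, hr⟩, hq⟩
    · rintro ⟨w, hw, hq⟩
      rw [e, ih] at hq
      obtain ⟨r, hr, hq⟩ := hq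
      rw [NFA.mem_stepSet] at hr
      obtain ⟨w', hw', hr⟩ := hr
      cases hw'
      exact ⟨r, by rw [NFA.mem_stepSet]; exact ⟨w, hw, hr⟩, hq⟩

theorem evalFrom_mono (N : NFA α σ) {S T : Set σ} (hST : S ⊆ T) (s : List α) :
    N.evalFrom S s ⊆ N.evalFrom T s := by
  intro q hq
  rw [mem_evalFrom_iff] at hq ⊢
  obtain ⟨r, hr, hq⟩ := hq
  exact ⟨r, hST hr, hq⟩

theorem evalFrom_append (N : NFA α σ) (S : Set σ) (u t : List α) :
    N.evalFrom S (u ++ t) = N.evalFrom (N.evalFrom S u) t := by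
  simp [NFA.evalFrom, List.foldl_append]

theorem evalFrom_le_loop (M : NFA α σ) :
    ∀ (s : List α) (S : Set σ), M.evalFrom S s ⊆ (loopNFA M).evalFrom S s := by
  intro s
  induction s with
  | nil => intro S; exact subset_rfl
  | cons a s ih =>
    intro S
    have e1 : M.evalFrom S (a :: s) = M.evalFrom (M.stepSet S a) s := rfl
    have e2 : (loopNFA M).evalFrom S (a :: s) = (loopNFA M).evalFrom ((loopNFA M).stepSet S a) s :=
      rfl
    rw [e1, e2]
    have hst : M.stepSet S a ⊆ (loopNFA M).stepSet S a := by
      intro x hx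
      rw [NFA.mem_stepSet] at hx ⊢
      obtain ⟨w, hw, hx⟩ := hx
      exact ⟨w, hw, Or.inr hx⟩
    exact (ih (M.stepSet S a)).trans (evalFrom_mono _ hst s)

variable {M : NFA α σ}
  (hni : ∀ (a : α) (qa q : σ), qa ∈ M.start → qa ∈ M.step q a → q = qa)

include hni

theorem no_incoming_M {p : σ} (hp : p ∈ M.start) :
    ∀ (v : List α) (S : Set σ), p ∈ M.evalFrom S v → p ∈ S := by
  intro v
  induction v using List.reverseRecOn with
  | nil => intro S hS; exact hS
  | append_singleton v a ih =>
    intro S hS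
    rw [M.evalFrom_append, M.evalFrom_singleton, NFA.mem_stepSet] at hS
    obtain ⟨w, hw, hs⟩ := hS
    have := hni a p w hp hs
    subst this
    exact ih S hw

theorem no_incoming_loop {p : σ} (hp : p ∈ M.start) :
    ∀ (v : List α) (S : Set σ), p ∈ (loopNFA M).evalFrom S v → p ∈ S := by
  intro v
  induction v using List.reverseRecOn with
  | nil => intro S hS; exact hS
  | append_singleton v a ih =>
    intro S hS
    rw [(loopNFA M).evalFrom_append, (loopNFA M).evalFrom_singleton, NFA.mem_stepSet] at hS
    obtain ⟨w, hw, hs⟩ := hS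
    have hwp : w = p := by
      rcases hs with ⟨hpw, _⟩ | hs
      · exact hpw.symm
      · exact hni a p w hp hs
    subst hwp
    exact ih S hw

theorem evalFrom_nonstart :
    ∀ (s : List α) (S : Set σ), (∀ w ∈ S, w ∉ M.start) →
      (loopNFA M).evalFrom S s = M.evalFrom S s := by
  intro s
  induction s with
  | nil => intro S _; rfl
  | cons a s ih =>
    intro S hS
    have e1 : M.evalFrom S (a :: s) = M.evalFrom (M.stepSet S a) s := rfl
    have e2 : (loopNFA M).evalFrom S (a :: s) = (loopNFA M).evalFrom ((loopNFA M).stepSet S a) s :=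
      rfl
    have hst : (loopNFA M).stepSet S a = M.stepSet S a := by
      ext x
      rw [NFA.mem_stepSet, NFA.mem_stepSet]
      constructor
      · rintro ⟨w, hw, ⟨hxw, hws⟩ | hx⟩
        · exact absurd hws (hS w hw)
        · exact ⟨w, hw, hx⟩
      · rintro ⟨w, hw, hx⟩
        exact ⟨w, hw, Or.inr hx⟩
    have hns : ∀ w ∈ M.stepSet S a, w ∉ M.start := by
      intro x hx hxs
      rw [NFA.mem_stepSet] at hx
      obtain ⟨w, hw, hx⟩ := hx
      have hwx := hni a x w hxs hx
      subst hwx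
      exact hS _ hw hxs
    rw [e1, e2, hst, ih _ hns]

omit hni

theorem loop_stay {p : σ} (hp : p ∈ M.start) :
    ∀ (u : List α) (S : Set σ), p ∈ S → p ∈ (loopNFA M).evalFrom S u := by
  intro u
  induction u with
  | nil => intro S hS; exact hS
  | cons a u ih =>
    intro S hS
    have e : (loopNFA M).evalFrom S (a :: u) = (loopNFA M).evalFrom ((loopNFA M).stepSet S a) u :=
      rfl
    rw [e]
    refine ih _ ?_
    rw [NFA.mem_stepSet]
    exact ⟨p, hS, Or.inl ⟨rfl, hp⟩⟩

theorem compose {p : σ} {u t : List α} (ht : t ∈ stateLang M p) (hu : u = [] ∨ p ∈ M.start) :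
    u ++ t ∈ stateLang (loopNFA M) p := by
  obtain ⟨y, hy, hyacc⟩ := ht
  rcases hu with rfl | hp
  · exact ⟨y, evalFrom_le_loop M t {p} hy, hyacc⟩
  · refine ⟨y, ?_, hyacc⟩
    rw [evalFrom_append]
    have h1 : y ∈ (loopNFA M).evalFrom {p} t := evalFrom_le_loop M t {p} hy
    have h2 : ({p} : Set σ) ⊆ (loopNFA M).evalFrom {p} u := by
      intro x hx; cases hx; exact loop_stay hp u {p} rfl
    exact evalFrom_mono _ h2 t h1

include hni

theorem decompose {p : σ} :
    ∀ s : List α, s ∈ stateLang (loopNFA M) p →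
      ∃ u t, s = u ++ t ∧ t ∈ stateLang M p ∧ (u = [] ∨ p ∈ M.start) := by
  by_cases hp : p ∈ M.start
  · intro s
    induction s with
    | nil =>
      intro hs
      obtain ⟨x, hx, hxacc⟩ := hs
      cases hx
      exact ⟨[], [], rfl, ⟨p, rfl, hxacc⟩, Or.inl rfl⟩
    | cons a s ih =>
      intro hs
      obtain ⟨x, hx, hxacc⟩ := hs
      have e : (loopNFA M).evalFrom {p} (a :: s)
          = (loopNFA M).evalFrom ((loopNFA M).stepSet {p} a) s := rfl
      rw [e, mem_evalFrom_iff] at hx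
      obtain ⟨r, hr, hx⟩ := hx
      rw [NFA.mem_stepSet] at hr
      obtain ⟨w, hw, hr⟩ := hr
      cases hw
      have hs' : s ∈ stateLang (loopNFA M) r := ⟨x, hx, hxacc⟩
      by_cases hrp : r = p
      · subst hrp
        obtain ⟨u, t, rfl, ht, _⟩ := ih hs'
        exact ⟨a :: u, t, rfl, ht, Or.inr hp⟩
      · rcases hr with ⟨hpr, _⟩ | hr
        · exact absurd hpr hrp
        · have hrns : r ∉ M.start := fun hrs => hrp (hni a r p hrs hr).symm
          rw [stateLang, Set.mem_setOf_eq,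
            evalFrom_nonstart hni s {r} (by rintro w rfl; exact hrns)] at hs'
          obtain ⟨y, hy, hyacc⟩ := hs'
          refine ⟨[], a :: s, rfl, ⟨y, ?_, hyacc⟩, Or.inl rfl⟩
          have e2 : M.evalFrom {p} (a :: s) = M.evalFrom (M.stepSet {p} a) s := rfl
          rw [e2]
          have hsub : ({r} : Set σ) ⊆ M.stepSet {p} a := by
            rintro z rfl
            rw [NFA.mem_stepSet]
            exact ⟨p, rfl, hr⟩
          exact evalFrom_mono _ hsub s hy
  · intro s hs
    rw [stateLang, Set.mem_setOf_eq,
      evalFrom_nonstart hni s {p} (by rintro w rfl; exact hp)] at hs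
    exact ⟨[], s, rfl, hs, Or.inl rfl⟩

theorem key (hM : IsSimple M) {p q : σ} (hpq : p ≠ q) {u t u' t' : List α}
    (he : u ++ t = u' ++ t') (ht : t ∈ stateLang M p) (ht' : t' ∈ stateLang M q)
    (hlen : t.length ≤ t'.length) (hup : u = [] ∨ p ∈ M.start) : False := by
  have hsuf : t <:+ t' := by
    refine List.suffix_of_suffix_length_le ?_ ⟨u', rfl⟩ hlen
    exact he ▸ ⟨u, rfl⟩
  obtain ⟨v, rfl⟩ := hsuf
  obtain ⟨y, hy, hyacc⟩ := ht'
  rw [evalFrom_append, mem_evalFrom_iff] at hy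
  obtain ⟨r, hr, hy⟩ := hy
  have htr : t ∈ stateLang M r := ⟨y, hy, hyacc⟩
  by_cases hrp : r = p
  · subst hrp
    rcases hup with rfl | hps
    · -- u = [], so t = u' ++ v ++ t, forcing v = []
      have hlv : v = [] := by
        have hlen2 := congrArg List.length he
        simp only [List.length_append, List.nil_append, List.length_nil] at hlen2
        have : v.length = 0 := by omega
        exact List.length_eq_zero_iff.mp this
      subst hlv
      exact hpq hr
    · exact hpq (no_incoming_M hni hps v {q} hr)
  · have hd := hM.2.2 p r (fun hh => hrp hh.symm)
    exact Set.disjoint_left.mp hd ht htr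

end LoopAux

/-- If in a simple NFA no start state can be reached by a single transition from any
other state, then the automaton with self-transitions added to the start states is
also simple. -/
theorem loopNFA_simple_of_no_incoming {α σ : Type} (M : NFA α σ) (hM : IsSimple M)
    (h : ¬ ∃ (a : α) (qa q : σ), qa ∈ M.start ∧ q ≠ qa ∧ qa ∈ M.step q a) :
    IsSimple (loopNFA M) := by
  push_neg at h
  have hni : ∀ (a : α) (qa q : σ), qa ∈ M.start → qa ∈ M.step q a → q = qa := by
    intro a qa q hqa hstep
    by_contra hne
    exact (h a qa q hqa hne) hstep
  refine ⟨?_, ?_, ?_⟩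
  · intro q
    obtain ⟨s, hs⟩ := hM.1 q
    exact ⟨s, LoopAux.evalFrom_le_loop M s M.start hs⟩
  · intro q
    obtain ⟨t, ht⟩ := hM.2.1 q
    exact ⟨t, LoopAux.compose ht (Or.inl rfl)⟩
  · intro p q hpq
    rw [Set.disjoint_left]
    intro s hsp hsq
    obtain ⟨u, t, rfl, ht, hup⟩ := LoopAux.decompose hni _ hsp
    obtain ⟨u', t', he, ht', huq⟩ := LoopAux.decompose hni _ hsq
    rcases le_total t.length t'.length with hle | hle
    · exact LoopAux.key hni hM hpq he ht ht' hle hup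
    · exact LoopAux.key hni hM hpq.symm he.symm ht' ht hle huq
end

section
/- Let M be a simple NFA. If the automaton M_⟲ obtained by adding self-transitions on all characters to every start state is simple, then no start state of M is reachable from any other state: there do not exist σ ∈ Σ, q_α ∈ Q_α, q ∈ Q with q ≠ q_α and q_α ∈ Δ(q, σ). -/
open List Set

/-- If for a simple NFA the automaton with self-transitions added to all start states
is again simple, then no start state is reachable by a single transition from any
other state. -/
theorem no_incoming_of_loopNFA_simple {α σ : Type} (M : NFA α σ) (hM : IsSimple M)
    (h : IsSimple (loopNFA M)) :
    ¬ ∃ (a : α) (qa q : σ), qa ∈ M.start ∧ q ≠ qa ∧ qa ∈ M.step q a := by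
  rintro ⟨a, qa, q, hstart, hne, hstep⟩
  -- monotonicity: evalFrom in M is included in evalFrom in loopNFA
  have mono : ∀ (s : List α) (S T : Set σ), S ⊆ T →
      M.evalFrom S s ⊆ (loopNFA M).evalFrom T s := by
    intro s
    induction s with
    | nil => intro S T hST; simpa [NFA.evalFrom] using hST
    | cons b s ih =>
      intro S T hST
      simp only [NFA.evalFrom, List.foldl_cons] at *
      apply ih
      intro x hx
      simp only [NFA.stepSet, Set.mem_iUnion] at hx ⊢
      obtain ⟨p, hp, hx⟩ := hx
      exact ⟨p, hST hp, Or.inr hx⟩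
  obtain ⟨s, hs⟩ := hM.2.1 qa
  obtain ⟨f, hf⟩ := hs
  have key : ∀ r : σ, qa ∈ (loopNFA M).stepSet {r} a →
      a :: s ∈ stateLang (loopNFA M) r := by
    intro r hr
    refine ⟨f, ?_, hf.2⟩
    have : (loopNFA M).evalFrom {r} (a :: s) =
        (loopNFA M).evalFrom ((loopNFA M).stepSet {r} a) s := rfl
    rw [this]
    exact mono s {qa} _ (by simpa using hr) hf.1
  have h1 : a :: s ∈ stateLang (loopNFA M) q := by
    apply key
    simp only [NFA.stepSet, Set.mem_iUnion, Set.mem_singleton_iff]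
    exact ⟨q, rfl, Or.inr hstep⟩
  have h2 : a :: s ∈ stateLang (loopNFA M) qa := by
    apply key
    simp only [NFA.stepSet, Set.mem_iUnion, Set.mem_singleton_iff]
    exact ⟨qa, rfl, Or.inl ⟨rfl, hstart⟩⟩
  exact Set.disjoint_left.mp (h.2.2 q qa hne) h1 h2
end

section
/- In a simple NFA, if no state other than a start state has a transition into a start state, then for every non-start state p, the language of p in the self-loop-augmented automaton M_⟲ equals the language of p in M. -/
open List Set

lemma evalFrom_loopNFA_eq {α σ : Type} (M : NFA α σ)
    (h : ∀ (a : α) (qa q : σ), qa ∈ M.start → q ≠ qa → qa ∉ M.step q a) :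
    ∀ (s : List α) (S : Set σ), (∀ q ∈ S, q ∉ M.start) →
      (loopNFA M).evalFrom S s = M.evalFrom S s ∧
      ∀ q ∈ M.evalFrom S s, q ∉ M.start := by
  intro s
  induction s with
  | nil => intro S hS; exact ⟨rfl, hS⟩
  | cons a s ih =>
    intro S hS
    have hstep : M.stepSet S a = (loopNFA M).stepSet S a := by
      ext x
      rw [NFA.mem_stepSet, NFA.mem_stepSet]
      constructor
      · rintro ⟨q, hq, hx⟩
        exact ⟨q, hq, Or.inr hx⟩
      · rintro ⟨q, hq, hx⟩
        rcases hx with ⟨heq, hqs⟩ | hx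
        · subst heq; exact absurd hqs (hS x hq)
        · exact ⟨q, hq, hx⟩
    have hS' : ∀ q ∈ M.stepSet S a, q ∉ M.start := by
      intro q hq hqstart
      rcases Set.mem_iUnion₂.mp hq with ⟨r, hr, hstepr⟩
      have hrq : r ≠ q := by
        rintro rfl; exact hS r hr hqstart
      exact h a q r hqstart hrq hstepr
    obtain ⟨h1, h2⟩ := ih (M.stepSet S a) hS'
    refine ⟨?_, ?_⟩
    · show (loopNFA M).evalFrom ((loopNFA M).stepSet S a) s = M.evalFrom (M.stepSet S a) s
      rw [← hstep, h1]
    · exact h2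

/-- In a simple NFA where no start state has an incoming transition from any other
state, the language of every non-start state is unchanged by adding self-transitions
to the start states. -/
theorem stateLang_loopNFA_eq_of_not_start {α σ : Type} (M : NFA α σ) (hM : IsSimple M)
    (h : ∀ (a : α) (qa q : σ), qa ∈ M.start → q ≠ qa → qa ∉ M.step q a) :
    ∀ p : σ, p ∉ M.start → stateLang (loopNFA M) p = stateLang M p := by
  intro p hp
  ext s
  have := (evalFrom_loopNFA_eq M h s {p} (by rintro q rfl; exact hp)).1
  simp only [stateLang, Set.mem_setOf_eq, this]
  rfl
end

section
/- For any generalized string g, the chain NFA constructed from g (states 0..|g|, start state 0, accepting state |g|, transition from q to q+1 on σ iff σ ∈ g[q+1]) is a simple NFA: all states are accessible, every state's language is non-empty, and the languages of distinct states are pairwise disjoint. -/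
open List Set

/-- The chain NFA of a generalized string `g` (a list of nonempty subsets of the
alphabet): states `0..|g|`, start state `0`, accepting state `|g|`, and a transition
from `q` to `q+1` on `a` iff `a ∈ g[q+1]`. -/
def chainNFA {α : Type} (g : List (Set α)) : NFA α (Fin (g.length + 1)) where
  step q a := {q' | ∃ h : (q : ℕ) < g.length, a ∈ g.get ⟨q, h⟩ ∧ (q' : ℕ) = (q : ℕ) + 1}
  start := {0}
  accept := {Fin.last g.length}

lemma chain_eval_len {α : Type} (g : List (Set α)) :
    ∀ (s : List α) (S : Set (Fin (g.length + 1))) (m : ℕ),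
      (∀ p ∈ S, (p : ℕ) = m) →
      ∀ p ∈ (chainNFA g).evalFrom S s, (p : ℕ) = m + s.length := by
  intro s
  induction s with
  | nil => intro S m hS p hp; simpa [NFA.evalFrom] using hS p hp
  | cons a s ih =>
    intro S m hS p hp
    have : ∀ p ∈ (chainNFA g).stepSet S a, (p : ℕ) = m + 1 := by
      intro p hp
      rcases Set.mem_iUnion₂.1 hp with ⟨q, hq, hstep⟩
      rcases hstep with ⟨h, _, heq⟩
      rw [heq, hS q hq]
    have := ih ((chainNFA g).stepSet S a) (m + 1) this p hp
    simp only [List.length_cons]; omega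

lemma chain_reach_last {α : Type} (g : List (Set α)) (hg : ∀ S ∈ g, S.Nonempty) :
    ∀ (j : ℕ) (q : Fin (g.length + 1)), (q : ℕ) + j = g.length →
      ∃ s : List α, Fin.last g.length ∈ (chainNFA g).evalFrom {q} s := by
  intro j
  induction j with
  | zero =>
    intro q hq
    refine ⟨[], ?_⟩
    have : q = Fin.last g.length := Fin.ext (by simpa using hq)
    simp [NFA.evalFrom, this]
  | succ j ih =>
    intro q hq
    have hlt : (q : ℕ) < g.length := by omega
    obtain ⟨a, ha⟩ := hg (g.get ⟨q, hlt⟩) (List.get_mem g _)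
    set q' : Fin (g.length + 1) := ⟨(q : ℕ) + 1, by omega⟩ with hq'
    obtain ⟨s, hs⟩ := ih q' (by simp [hq']; omega)
    refine ⟨a :: s, ?_⟩
    have hstep : (chainNFA g).stepSet {q} a = {q'} := by
      ext p
      simp only [NFA.stepSet, Set.mem_iUnion₂, Set.mem_singleton_iff]
      constructor
      · rintro ⟨r, hr, h, _, heq⟩
        subst hr
        exact Fin.ext heq
      · rintro rfl
        exact ⟨q, rfl, hlt, ha, rfl⟩
    show Fin.last g.length ∈ (chainNFA g).evalFrom ((chainNFA g).stepSet {q} a) s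
    rw [hstep]; exact hs


/-- The chain NFA of a generalized string is simple. -/
theorem chainNFA_simple {α : Type} (g : List (Set α)) (hg : ∀ S ∈ g, S.Nonempty) :
    IsSimple (chainNFA g) := by
  refine ⟨?_, ?_, ?_⟩
  · -- accessibility
    have key : ∀ (k : ℕ) (h : k < g.length + 1), ∃ s, (⟨k, h⟩ : Fin (g.length + 1)) ∈ (chainNFA g).eval s := by
      intro k
      induction k with
      | zero =>
        intro h
        exact ⟨[], by simp [NFA.eval, NFA.evalFrom, chainNFA]⟩
      | succ k ih =>
        intro h
        have hk : k < g.length + 1 := by omega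
        obtain ⟨s, hs⟩ := ih hk
        have hlt : k < g.length := by omega
        obtain ⟨a, ha⟩ := hg (g.get ⟨k, hlt⟩) (List.get_mem g _)
        refine ⟨s ++ [a], ?_⟩
        rw [NFA.eval_append_singleton]
        exact Set.mem_iUnion₂.2 ⟨⟨k, hk⟩, hs, hlt, ha, rfl⟩
    intro q
    obtain ⟨s, hs⟩ := key q q.isLt
    exact ⟨s, by simpa using hs⟩
  · -- nonempty languages
    intro q
    obtain ⟨s, hs⟩ := chain_reach_last g hg (g.length - q) q (by omega)
    exact ⟨s, Fin.last g.length, hs, rfl⟩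
  · -- disjointness
    intro p q hpq
    rw [Set.disjoint_left]
    rintro s ⟨r, hr, hr'⟩ ⟨r', hr2, hr2'⟩
    apply hpq
    have h1 := chain_eval_len g s {p} p (by simp) r hr
    have h2 := chain_eval_len g s {q} q (by simp) r' hr2
    have e1 : (r : ℕ) = g.length := by
      have : r = Fin.last g.length := hr'
      simp [this]
    have e2 : (r' : ℕ) = g.length := by
      have : r' = Fin.last g.length := hr2'
      simp [this]
    exact Fin.ext (by omega)
end

section
/- In the chain NFA built from a generalized string g, the language of state i consists exactly of the strings of length |g| − i matching the suffix of g starting at position i+1; in particular, all strings in L(i) have length |g| − i, so languages of distinct states are disjoint. -/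
open List Set

lemma evalFrom_empty {α σ : Type} (M : NFA α σ) (s : List α) : M.evalFrom ∅ s = ∅ := by
  induction s with
  | nil => simp [NFA.evalFrom]
  | cons a t ih =>
    have h : M.stepSet ∅ a = ∅ := by simp [NFA.stepSet]
    simpa [NFA.evalFrom, h] using ih

lemma key {α : Type} (g : List (Set α)) (s : List α) :
    ∀ i : Fin (g.length + 1),
      s ∈ stateLang (chainNFA g) i ↔ List.Forall₂ (· ∈ ·) s (g.drop (i : ℕ)) := by
  induction s with
  | nil =>
    intro i
    simp only [stateLang, NFA.evalFrom, List.foldl_nil, Set.mem_setOf_eq,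
      List.forall₂_nil_left_iff, List.drop_eq_nil_iff]
    constructor
    · rintro ⟨x, hx1, hx2⟩
      simp only [chainNFA, Set.mem_singleton_iff] at hx1 hx2
      subst hx1
      have := congrArg Fin.val hx2
      simp [Fin.last] at this
      omega
    · intro h
      have hi : i = Fin.last g.length := by
        apply Fin.ext; simp [Fin.last]; omega
      exact ⟨i, rfl, by simp [chainNFA, hi]⟩
  | cons a t ih =>
    intro i
    have hstep : (chainNFA g).evalFrom {i} (a::t)
        = (chainNFA g).evalFrom ((chainNFA g).step i a) t := by
      simp [NFA.evalFrom, NFA.stepSet]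
    show ((chainNFA g).evalFrom {i} (a::t) ∩ (chainNFA g).accept).Nonempty ↔ _
    rw [hstep]
    by_cases hlt : (i:ℕ) < g.length
    · have hdrop : g.drop (i:ℕ) = g[(i:ℕ)]'hlt :: g.drop ((i:ℕ)+1) := by
        rw [List.drop_eq_getElem_cons hlt]
      by_cases ha : a ∈ g[(i:ℕ)]'hlt
      · have hset : (chainNFA g).step i a = {⟨(i:ℕ)+1, Nat.succ_lt_succ hlt⟩} := by
          ext q
          simp only [chainNFA, Set.mem_setOf_eq, Set.mem_singleton_iff]
          constructor
          · rintro ⟨h, -, hq⟩; exact Fin.ext hq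
          · rintro rfl; exact ⟨hlt, ha, rfl⟩
        rw [hset, hdrop, List.forall₂_cons]
        have := ih ⟨(i:ℕ)+1, Nat.succ_lt_succ hlt⟩
        simp only [stateLang, Set.mem_setOf_eq] at this
        rw [this]
        simp [ha]
      · have hset : (chainNFA g).step i a = ∅ := by
          ext q
          simp only [chainNFA, Set.mem_setOf_eq, Set.mem_empty_iff_false, iff_false]
          rintro ⟨h, ha', -⟩; exact ha ha'
        rw [hset, evalFrom_empty, hdrop]
        simp only [Set.empty_inter, List.forall₂_cons]
        simp [ha]
    · have hset : (chainNFA g).step i a = ∅ := by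
        ext q
        simp only [chainNFA, Set.mem_setOf_eq, Set.mem_empty_iff_false, iff_false]
        rintro ⟨h, -, -⟩; exact hlt h
      have hdrop : g.drop (i:ℕ) = [] := by
        rw [List.drop_eq_nil_iff]; omega
      rw [hset, evalFrom_empty, hdrop]
      simp

/-- In the chain NFA of a generalized string `g`, the language of state `i` is the
set of strings matching the suffix of `g` starting at position `i + 1`; in
particular every string in that language has length `|g| - i`, so the languages of
distinct states are disjoint. -/
theorem chainNFA_stateLang {α : Type} (g : List (Set α)) (hg : ∀ S ∈ g, S.Nonempty) :
    (∀ i : Fin (g.length + 1),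
      stateLang (chainNFA g) i = {s : List α | List.Forall₂ (· ∈ ·) s (g.drop (i : ℕ))}) ∧
    (∀ i : Fin (g.length + 1), ∀ s ∈ stateLang (chainNFA g) i,
      s.length = g.length - (i : ℕ)) ∧
    (∀ i j : Fin (g.length + 1), i ≠ j →
      Disjoint (stateLang (chainNFA g) i) (stateLang (chainNFA g) j)) := by
  have hlen : ∀ i : Fin (g.length + 1), ∀ s ∈ stateLang (chainNFA g) i,
      s.length = g.length - (i : ℕ) := by
    intro i s hs
    have h := (key g s i).mp hs
    have := h.length_eq
    simpa using this
  refine ⟨fun i => ?_, hlen, fun i j hij => ?_⟩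
  · ext s; exact key g s i
  · rw [Set.disjoint_left]
    intro s hsi hsj
    have h1 := hlen i s hsi
    have h2 := hlen j s hsj
    have hi := i.isLt
    have hj := j.isLt
    exact hij (Fin.ext (by omega))
end

section
/- Let G be a finite set of generalized strings of equal length ℓ. The level-wise NFA constructed from G accepts a string s if and only if there exists g ∈ G with s ◁ g. -/
open List Set

/-- The parent of a state `(H, k)` under character `a`:
`Parent ((H, k), a) = ({h ∈ H | a ∈ h[k]}, k - 1)`. -/
def Parent {α : Type} (p : Set (List (Set α)) × ℕ) (a : α) : Set (List (Set α)) × ℕ :=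
  ({h ∈ p.1 | a ∈ h.getD (p.2 - 1) ∅}, p.2 - 1)

/-- `LevelAux G ℓ j` is the level `Q_{ℓ - j}`: `Q_ℓ = {(G, ℓ)}` and each higher level
consists of the nonempty parents of states of the level below. -/
def LevelAux {α : Type} (G : Set (List (Set α))) (ℓ : ℕ) : ℕ → Set (Set (List (Set α)) × ℕ)
  | 0 => {(G, ℓ)}
  | j + 1 => {p | p.1.Nonempty ∧ ∃ q ∈ LevelAux G ℓ j, ∃ a : α, Parent q a = p}

/-- The level-wise NFA built from a set `G` of generalized strings of length `ℓ`:
transitions go from a state to those states of the next level whose parent it is,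
the start states are the top level `Q_0` and the accepting state is `(G, ℓ)`. -/
def levelNFA {α : Type} (G : Set (List (Set α))) (ℓ : ℕ) :
    NFA α (Set (List (Set α)) × ℕ) where
  step p a := {q | p.2 < ℓ ∧ q ∈ LevelAux G ℓ (ℓ - (p.2 + 1)) ∧ Parent q a = p}
  start := LevelAux G ℓ ℓ
  accept := {(G, ℓ)}


section LevelProofAux

variable {α : Type}

/-- Splitting a `Forall₂` relation over an append on the left. -/
lemma forall2_append_split {R : α → Set α → Prop} :
    ∀ (u v : List α) (w : List (Set α)),
      List.Forall₂ R (u ++ v) w ↔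
        List.Forall₂ R u (w.take u.length) ∧ List.Forall₂ R v (w.drop u.length)
  | [], v, w => by simp
  | a :: u, v, w => by
    cases w with
    | nil => simp
    | cons b w =>
      simp only [List.cons_append, List.forall₂_cons, List.length_cons, List.take_succ_cons,
        List.drop_succ_cons, forall2_append_split u v w]
      tauto

lemma drop_eq_getD_cons {g : List (Set α)} {m : ℕ} (hm : m < g.length) :
    g.drop m = g.getD m ∅ :: g.drop (m + 1) := by
  rw [List.getD_eq_getElem _ _ hm, List.drop_eq_getElem_cons hm]

/-- The key computation of `Parent` on a "matching" state. -/
lemma parent_set_eq {G : Set (List (Set α))} {ℓ : ℕ} (hlen : ∀ g ∈ G, g.length = ℓ)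
    (a : α) (u : List α) (m : ℕ) (hm : m < ℓ) :
    {h ∈ {g ∈ G | List.Forall₂ (· ∈ ·) u (g.drop (m + 1))} | a ∈ h.getD m ∅}
      = {g ∈ G | List.Forall₂ (· ∈ ·) (a :: u) (g.drop m)} := by
  ext g
  simp only [Set.mem_sep_iff, Set.mem_setOf_eq]
  constructor
  · rintro ⟨⟨hg, hu⟩, ha⟩
    refine ⟨hg, ?_⟩
    rw [drop_eq_getD_cons (by rw [hlen g hg]; exact hm)]
    exact List.Forall₂.cons ha hu
  · rintro ⟨hg, h⟩
    rw [drop_eq_getD_cons (by rw [hlen g hg]; exact hm)] at h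
    rcases List.forall₂_cons.1 h with ⟨ha, hu⟩
    exact ⟨⟨hg, hu⟩, ha⟩

/-- Characterization of the levels of the level-wise NFA. -/
lemma levelAux_iff {G : Set (List (Set α))} {ℓ : ℕ} (hG : G.Nonempty)
    (hlen : ∀ g ∈ G, g.length = ℓ) :
    ∀ j, j ≤ ℓ → ∀ q, (q ∈ LevelAux G ℓ j ↔
      ∃ t : List α, t.length = j ∧
        q = ({g ∈ G | List.Forall₂ (· ∈ ·) t (g.drop (ℓ - j))}, ℓ - j) ∧
        ∃ g ∈ G, List.Forall₂ (· ∈ ·) t (g.drop (ℓ - j))) := by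
  intro j
  induction j with
  | zero =>
    intro _ q
    have hset : {g ∈ G | List.Forall₂ (· ∈ ·) ([] : List α) (g.drop (ℓ - 0))} = G := by
      ext g
      simp only [Set.mem_sep_iff, List.forall₂_nil_left_iff, Nat.sub_zero]
      refine ⟨fun h => h.1, fun hg => ⟨hg, ?_⟩⟩
      exact List.drop_eq_nil_of_le (le_of_eq (hlen g hg))
    constructor
    · intro hq
      have : q = (G, ℓ) := hq
      obtain ⟨g, hg⟩ := hG
      refine ⟨[], rfl, ?_, g, hg, ?_⟩
      · rw [this, hset, Nat.sub_zero]
      · simp [List.drop_eq_nil_of_le (le_of_eq (hlen g hg))]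
    · rintro ⟨t, ht, rfl, -⟩
      rw [List.length_eq_zero_iff.1 ht] at *
      show ({g ∈ G | List.Forall₂ (· ∈ ·) ([] : List α) (g.drop (ℓ - 0))}, ℓ - 0) ∈ LevelAux G ℓ 0
      rw [hset]
      show _ = ((G, ℓ) : Set (List (Set α)) × ℕ)
      simp
  | succ j ih =>
    intro hj q
    have hjl : j ≤ ℓ := Nat.le_of_succ_le hj
    obtain ⟨m, hm⟩ : ∃ m, ℓ - j = m + 1 := ⟨ℓ - (j + 1), by omega⟩
    have hmj : ℓ - (j + 1) = m := by omega
    have hmℓ : m < ℓ := by omega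
    constructor
    · rintro ⟨hne, p, hp, a, rfl⟩
      obtain ⟨t, htlen, rfl, -⟩ := (ih hjl p).1 hp
      rw [hm] at *
      have hPar : Parent ({g ∈ G | List.Forall₂ (· ∈ ·) t (g.drop (m + 1))}, m + 1) a
          = ({g ∈ G | List.Forall₂ (· ∈ ·) (a :: t) (g.drop m)}, m) := by
        unfold Parent
        simp only [Nat.add_sub_cancel]
        rw [parent_set_eq hlen a t m hmℓ]
      rw [hPar] at hne ⊢
      obtain ⟨g, hg⟩ := hne
      refine ⟨a :: t, by simp [htlen], by rw [hmj], g, hg.1, ?_⟩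
      rw [hmj]; exact hg.2
    · rintro ⟨t, htlen, rfl, g, hg, hmatch⟩
      rw [hmj] at *
      cases t with
      | nil => simp at htlen
      | cons a u =>
        have hulen : u.length = j := by simpa using htlen
        have hgd : g.drop m = g.getD m ∅ :: g.drop (m + 1) := by
          apply drop_eq_getD_cons; rw [hlen g hg]; exact hmℓ
        rw [hgd] at hmatch
        rcases List.forall₂_cons.1 hmatch with ⟨ha, hu⟩
        refine ⟨⟨g, hg, by rw [hgd]; exact List.Forall₂.cons ha hu⟩,
          ({g ∈ G | List.Forall₂ (· ∈ ·) u (g.drop (m + 1))}, m + 1), ?_, a, ?_⟩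
        · exact (ih hjl _).2 ⟨u, hulen, by rw [hm], g, hg, by rw [hm]; exact hu⟩
        · unfold Parent
          simp only [Nat.add_sub_cancel]
          rw [parent_set_eq hlen a u m hmℓ]

/-- Characterization of the states reached by the level-wise NFA after reading `s`. -/
lemma eval_iff {G : Set (List (Set α))} {ℓ : ℕ} (hG : G.Nonempty)
    (hlen : ∀ g ∈ G, g.length = ℓ) :
    ∀ (s : List α) q, (q ∈ (levelNFA G ℓ).eval s ↔
      ∃ t : List α, t.length + s.length = ℓ ∧
        q = ({g ∈ G | List.Forall₂ (· ∈ ·) t (g.drop s.length)}, s.length) ∧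
        ∃ g ∈ G, List.Forall₂ (· ∈ ·) (s ++ t) g) := by
  intro s
  induction s using List.reverseRecOn with
  | nil =>
    intro q
    rw [NFA.eval_nil]
    show q ∈ LevelAux G ℓ ℓ ↔ _
    rw [levelAux_iff hG hlen ℓ le_rfl q]
    simp [Nat.sub_self]
  | append_singleton s a ih =>
    intro q
    rw [NFA.eval_append_singleton, NFA.mem_stepSet]
    set m := s.length with hmdef
    have hlen_sa : (s ++ [a]).length = m + 1 := by simp [hmdef]
    constructor
    · rintro ⟨p, hp, hstep⟩
      obtain ⟨hlt, hq, hparq⟩ := hstep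
      obtain ⟨t, htm, rfl, g0, hg0, hmat0⟩ := (ih p).1 hp
      have hmlt : m < ℓ := hlt
      have hj : ℓ - (m + 1) ≤ ℓ := Nat.sub_le _ _
      obtain ⟨u, hulen, rfl, -, -, -⟩ := (levelAux_iff hG hlen _ hj q).1 hq
      have hsub : ℓ - (ℓ - (m + 1)) = m + 1 := by omega
      rw [hsub] at hparq ⊢
      have hPar : Parent ({g ∈ G | List.Forall₂ (· ∈ ·) u (g.drop (m + 1))}, m + 1) a
          = ({g ∈ G | List.Forall₂ (· ∈ ·) (a :: u) (g.drop m)}, m) := by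
        unfold Parent
        simp only [Nat.add_sub_cancel]
        rw [parent_set_eq hlen a u m hmlt]
      rw [hPar] at hparq
      -- set equality between the two descriptions of p.1
      have hsets : {g ∈ G | List.Forall₂ (· ∈ ·) (a :: u) (g.drop m)}
          = {g ∈ G | List.Forall₂ (· ∈ ·) t (g.drop m)} :=
        congrArg Prod.fst hparq
      -- g0 matches s ++ t, hence is in the RHS set, hence matches a :: u after m
      have hg0s : List.Forall₂ (· ∈ ·) s (g0.take m) ∧ List.Forall₂ (· ∈ ·) t (g0.drop m) := by
        rw [← forall2_append_split]; exact hmat0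
      have hg0' : g0 ∈ {g ∈ G | List.Forall₂ (· ∈ ·) (a :: u) (g.drop m)} := by
        rw [hsets]; exact ⟨hg0, hg0s.2⟩
      refine ⟨u, by simp [hulen]; omega, by rw [hlen_sa], g0, hg0, ?_⟩
      rw [List.append_assoc, List.singleton_append, forall2_append_split]
      exact ⟨hg0s.1, hg0'.2⟩
    · rintro ⟨u, hulen, rfl, g0, hg0, hmat0⟩
      rw [hlen_sa] at hulen
      have hmlt : m < ℓ := by omega
      have hmat0' : List.Forall₂ (· ∈ ·) (s ++ (a :: u)) g0 := by
        rwa [List.append_assoc, List.singleton_append] at hmat0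
      have hsplit : List.Forall₂ (· ∈ ·) s (g0.take m) ∧
          List.Forall₂ (· ∈ ·) (a :: u) (g0.drop m) := by
        rw [← forall2_append_split]; exact hmat0'
      have hgd : g0.drop m = g0.getD m ∅ :: g0.drop (m + 1) := by
        apply drop_eq_getD_cons; rw [hlen g0 hg0]; exact hmlt
      have hg0au := hsplit.2
      rw [hgd] at hg0au
      rcases List.forall₂_cons.1 hg0au with ⟨ha0, hu0⟩
      refine ⟨({g ∈ G | List.Forall₂ (· ∈ ·) (a :: u) (g.drop m)}, m), ?_, ?_⟩
      · rw [ih]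
        exact ⟨a :: u, by simp; omega, rfl, g0, hg0, hmat0'⟩
      · refine ⟨hmlt, ?_, ?_⟩
        · have hj : ℓ - (m + 1) ≤ ℓ := Nat.sub_le _ _
          rw [levelAux_iff hG hlen _ hj]
          have hsub : ℓ - (ℓ - (m + 1)) = m + 1 := by omega
          rw [hlen_sa, hsub]
          exact ⟨u, by omega, rfl, g0, hg0, hu0⟩
        · show Parent (_, (s ++ [a]).length) a = _
          rw [hlen_sa]
          unfold Parent
          simp only [Nat.add_sub_cancel]
          rw [parent_set_eq hlen a u m hmlt]

end LevelProofAux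

/-- The level-wise NFA built from a finite nonempty set of generalized strings of
equal length `ℓ` accepts a string `s` iff `s` matches some `g ∈ G`. -/
theorem levelNFA_accepts {α : Type} (G : Set (List (Set α))) (ℓ : ℕ)
    (hfin : G.Finite) (hG : G.Nonempty)
    (hlen : ∀ g ∈ G, g.length = ℓ)
    (hne : ∀ g ∈ G, ∀ S ∈ g, S.Nonempty) :
    ∀ s : List α, s ∈ (levelNFA G ℓ).accepts ↔ ∃ g ∈ G, List.Forall₂ (· ∈ ·) s g := by
  intro s
  rw [NFA.mem_accepts]
  constructor
  · rintro ⟨S, hS, hev⟩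
    have hSacc : S = ((G, ℓ) : Set (List (Set α)) × ℕ) := hS
    rw [hSacc] at hev
    obtain ⟨t, htlen, heq, g, hg, hmat⟩ := (eval_iff hG hlen s _).1 hev
    have hsl : s.length = ℓ := (congrArg Prod.snd heq).symm
    have ht0 : t = [] := List.length_eq_zero_iff.1 (by omega)
    rw [ht0, List.append_nil] at hmat
    exact ⟨g, hg, hmat⟩
  · rintro ⟨g, hg, hmat⟩
    have hsl : s.length = ℓ := by rw [hmat.length_eq, hlen g hg]
    refine ⟨(G, ℓ), rfl, ?_⟩
    rw [show (levelNFA G ℓ).evalFrom (levelNFA G ℓ).start s = (levelNFA G ℓ).eval s from rfl,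
      eval_iff hG hlen]
    refine ⟨[], by simp [hsl], ?_, g, hg, by simpa using hmat⟩
    rw [hsl]
    have : {g ∈ G | List.Forall₂ (· ∈ ·) ([] : List α) (g.drop ℓ)} = G := by
      ext g'
      simp only [Set.mem_sep_iff, List.forall₂_nil_left_iff]
      exact ⟨fun h => h.1, fun hg' => ⟨hg', List.drop_eq_nil_of_le (le_of_eq (hlen g' hg'))⟩⟩
    rw [this]
end

section
/- Let G be a finite set of generalized strings of equal length ℓ. The level-wise NFA constructed from G is a simple NFA: all states are accessible, each state's language is non-empty, and languages of distinct states are pairwise disjoint. -/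
open List Set

lemma evalFrom_cons' {α σ : Type} (M : NFA α σ) (S : Set σ) (a : α) (s : List α) :
    M.evalFrom S (a :: s) = M.evalFrom (M.stepSet S a) s := rfl

lemma evalFrom_mono {α σ : Type} (M : NFA α σ) {S T : Set σ} (h : S ⊆ T) (s : List α) :
    M.evalFrom S s ⊆ M.evalFrom T s := by
  induction s generalizing S T with
  | nil => simpa using h
  | cons a s ih =>
    rw [evalFrom_cons', evalFrom_cons']
    refine ih ?_
    intro x hx
    rw [NFA.mem_stepSet] at hx ⊢
    obtain ⟨t, ht, hx⟩ := hx
    exact ⟨t, h ht, hx⟩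

lemma evalFrom_biUnion {α σ : Type} (M : NFA α σ) (s : List α) (S : Set σ) :
    M.evalFrom S s = ⋃ q ∈ S, M.evalFrom {q} s := by
  induction s generalizing S with
  | nil => simp
  | cons a s ih =>
    rw [evalFrom_cons', ih]
    ext x
    simp only [Set.mem_iUnion, evalFrom_cons']
    constructor
    · rintro ⟨q', hq', hx⟩
      rw [NFA.mem_stepSet] at hq'
      obtain ⟨q, hq, hstep⟩ := hq'
      refine ⟨q, hq, ?_⟩
      rw [ih]
      refine Set.mem_iUnion₂.2 ⟨q', ?_, hx⟩
      rw [NFA.mem_stepSet]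
      exact ⟨q, rfl, hstep⟩
    · rintro ⟨q, hq, hx⟩
      rw [ih] at hx
      obtain ⟨q', hq', hx⟩ := Set.mem_iUnion₂.1 hx
      rw [NFA.mem_stepSet] at hq'
      obtain ⟨t, ht, hq'⟩ := hq'
      refine ⟨q', ?_, hx⟩
      rw [NFA.mem_stepSet]
      obtain rfl : t = q := ht
      exact ⟨t, hq, hq'⟩

lemma levelAux_snd {α : Type} (G : Set (List (Set α))) (ℓ : ℕ) :
    ∀ j, ∀ q ∈ LevelAux G ℓ j, q.2 = ℓ - j := by
  intro j
  induction j with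
  | zero => rintro q hq; obtain rfl : q = (G, ℓ) := hq; simp
  | succ j ih =>
    rintro q ⟨-, q₀, hq₀, a, rfl⟩
    have := ih q₀ hq₀
    simp [Parent, this, Nat.sub_sub]

lemma levelAux_fst_sub {α : Type} (G : Set (List (Set α))) (ℓ : ℕ) :
    ∀ j, ∀ q ∈ LevelAux G ℓ j, q.1 ⊆ G := by
  intro j
  induction j with
  | zero => rintro q hq; obtain rfl : q = (G, ℓ) := hq; exact fun x hx => hx
  | succ j ih =>
    rintro q ⟨-, q₀, hq₀, a, rfl⟩
    intro h hh
    exact ih q₀ hq₀ hh.1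

lemma levelAux_fst_ne {α : Type} {G : Set (List (Set α))} {ℓ : ℕ} (hG : G.Nonempty) :
    ∀ j, ∀ q ∈ LevelAux G ℓ j, q.1.Nonempty := by
  rintro (_ | j) q hq
  · obtain rfl : q = (G, ℓ) := hq; exact hG
  · exact hq.1

/-- The unique candidate source state for a string `s` reaching the accepting state. -/
def trace {α : Type} (G : Set (List (Set α))) (ℓ : ℕ) : List α → Set (List (Set α)) × ℕ
  | [] => (G, ℓ)
  | a :: s => Parent (trace G ℓ s) a

lemma stateLang_uniq {α : Type} (G : Set (List (Set α))) (ℓ : ℕ) :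
    ∀ s : List α, ∀ q, s ∈ stateLang (levelNFA G ℓ) q → q = trace G ℓ s := by
  intro s
  induction s with
  | nil =>
    intro q hq
    obtain ⟨x, hx1, hx2⟩ := hq
    rw [NFA.evalFrom_nil, Set.mem_singleton_iff] at hx1
    subst hx1
    exact hx2
  | cons a s ih =>
    intro q hq
    obtain ⟨x, hx1, hx2⟩ := hq
    rw [evalFrom_cons'] at hx1
    rw [evalFrom_biUnion] at hx1
    obtain ⟨q', hq', hx⟩ := Set.mem_iUnion₂.1 hx1
    rw [NFA.mem_stepSet] at hq'
    obtain ⟨t, ht, hstep⟩ := hq'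
    rw [Set.mem_singleton_iff] at ht
    subst ht
    have h1 : q' = trace G ℓ s := ih q' ⟨x, hx, hx2⟩
    obtain ⟨-, -, h3⟩ := hstep
    rw [trace, ← h1, h3]

/-- The level-wise NFA built from a finite nonempty set of generalized strings of
equal length is a simple NFA: on its state space (the union of the levels), all
states are accessible, all state languages are nonempty, and the languages of
distinct states are pairwise disjoint. -/
theorem levelNFA_simple {α : Type} (G : Set (List (Set α))) (ℓ : ℕ)
    (hfin : G.Finite) (hG : G.Nonempty)
    (hlen : ∀ g ∈ G, g.length = ℓ)
    (hne : ∀ g ∈ G, ∀ S ∈ g, S.Nonempty) :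
    (∀ q ∈ ⋃ j ≤ ℓ, LevelAux G ℓ j, Accessible (levelNFA G ℓ) q) ∧
    (∀ q ∈ ⋃ j ≤ ℓ, LevelAux G ℓ j, (stateLang (levelNFA G ℓ) q).Nonempty) ∧
    (∀ p ∈ ⋃ j ≤ ℓ, LevelAux G ℓ j, ∀ q ∈ ⋃ j ≤ ℓ, LevelAux G ℓ j, p ≠ q →
      Disjoint (stateLang (levelNFA G ℓ) p) (stateLang (levelNFA G ℓ) q)) := by

  have snd := levelAux_snd G ℓ
  have langne : ∀ j ≤ ℓ, ∀ q ∈ LevelAux G ℓ j, (stateLang (levelNFA G ℓ) q).Nonempty := by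
    intro j
    induction j with
    | zero =>
      intro _ q hq
      obtain rfl : q = (G, ℓ) := hq
      exact ⟨[], (G, ℓ), by rw [NFA.evalFrom_nil]; exact rfl, rfl⟩
    | succ j ih =>
      intro hj q hq
      obtain ⟨hne', q₀, hq₀, a, rfl⟩ := hq
      obtain ⟨s, x, hx1, hx2⟩ := ih (by omega) q₀ hq₀
      refine ⟨a :: s, x, ?_, hx2⟩
      rw [evalFrom_cons']
      refine evalFrom_mono _ ?_ s hx1
      intro y hy
      obtain rfl : y = q₀ := hy
      rw [NFA.mem_stepSet]
      have hmem : Parent y a ∈ LevelAux G ℓ (j + 1) := ⟨hne', y, hq₀, a, rfl⟩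
      have h2 : (Parent y a).2 = ℓ - (j + 1) := snd _ _ hmem
      refine ⟨Parent y a, rfl, by omega, ?_, rfl⟩
      rw [show ℓ - ((Parent y a).2 + 1) = j by omega]
      exact hq₀
  have access : ∀ k ≤ ℓ, ∀ q ∈ LevelAux G ℓ (ℓ - k), ∃ s, q ∈ (levelNFA G ℓ).eval s := by
    intro k
    induction k with
    | zero =>
      intro _ q hq
      exact ⟨[], by rw [NFA.eval_nil]; simp at hq; exact hq⟩
    | succ k ih =>
      intro hk q hq
      have hq2 : q.2 = k + 1 := by have := snd _ q hq; omega
      obtain ⟨h, hh⟩ := levelAux_fst_ne hG _ q hq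
      have hhG : h ∈ G := levelAux_fst_sub G ℓ _ q hq hh
      have hlh : h.length = ℓ := hlen h hhG
      have hkl : k < h.length := by omega
      have hS : (h.getD k ∅).Nonempty := by
        rw [List.getD_eq_getElem h ∅ hkl]
        exact hne h hhG _ (List.getElem_mem hkl)
      obtain ⟨a, ha⟩ := hS
      have hpar : Parent q a ∈ LevelAux G ℓ (ℓ - k) := by
        have : ℓ - k = (ℓ - (k + 1)) + 1 := by omega
        rw [this]
        exact ⟨⟨h, hh, by rw [hq2]; simpa using ha⟩, q, hq, a, rfl⟩
      obtain ⟨s, hs⟩ := ih (by omega) _ hpar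
      refine ⟨s ++ [a], ?_⟩
      rw [NFA.eval_append_singleton, NFA.mem_stepSet]
      refine ⟨Parent q a, hs, ?_, ?_, rfl⟩
      · show (Parent q a).2 < ℓ
        simp [Parent, hq2]; omega
      · have : ℓ - ((Parent q a).2 + 1) = ℓ - (k + 1) := by
          simp [Parent, hq2]
        rw [this]; exact hq
  refine ⟨?_, ?_, ?_⟩
  · intro q hq
    simp only [Set.mem_iUnion] at hq
    obtain ⟨j, hj, hq⟩ := hq
    refine access (ℓ - j) (by omega) q ?_
    rw [show ℓ - (ℓ - j) = j by omega]
    exact hq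
  · intro q hq
    simp only [Set.mem_iUnion] at hq
    obtain ⟨j, hj, hq⟩ := hq
    exact langne j hj q hq
  · intro p _ q _ hpq
    rw [Set.disjoint_left]
    intro s hs hs'
    exact hpq ((stateLang_uniq G ℓ s p hs).trans (stateLang_uniq G ℓ s q hs').symm)
end

section
/- Let g be a generalized string and d_max ∈ ℕ. The Hamming-neighborhood NFA built from (g, d_max) accepts exactly the strings s of length |g| with Hamming distance d(s, g) ≤ d_max. -/
open List Set

/-- Hamming distance between a string `s` and a generalized string `h` of the same
length: the number of positions `i` with `s[i] ∉ h[i]`. -/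
noncomputable def hamDist {α : Type} (s : List α) (h : List (Set α)) : ℕ :=
  Nat.card {i : Fin s.length // s.get i ∉ h.getD (i : ℕ) ∅}

/-- The state space of the Hamming-neighborhood NFA for `(g, d)`:
pairs `(e, k)` with `0 ≤ e ≤ d`, `0 ≤ k ≤ |g|` and `|g| - k - e ≥ 0`. -/
def hamQ {α : Type} (g : List (Set α)) (d : ℕ) : Set (ℕ × ℕ) :=
  {p | p.1 ≤ d ∧ p.2 ≤ g.length ∧ p.1 + p.2 ≤ g.length}

/-- The Hamming-neighborhood NFA for a generalized string `g` and threshold `d`: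
from `(e, k)` reading a matching character leads to `(e, k+1)`, a mismatching one to
`(e-1, k+1)`, clipped to the state space; start states `(e, 0)`, accepting state
`(0, |g|)`. -/
def hamNFA {α : Type} (g : List (Set α)) (d : ℕ) : NFA α (ℕ × ℕ) where
  step p a := {q ∈ hamQ g d |
      (a ∈ g.getD p.2 ∅ ∧ q = (p.1, p.2 + 1)) ∨
      (a ∉ g.getD p.2 ∅ ∧ 0 < p.1 ∧ q = (p.1 - 1, p.2 + 1))}
  start := {p ∈ hamQ g d | p.2 = 0}
  accept := {(0, g.length)}

section Aux

variable {α : Type}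

open scoped Classical in
/-- Mismatch indicator at position `k`. -/
noncomputable def hamInd (g : List (Set α)) (k : ℕ) (a : α) : ℕ :=
  if a ∈ g.getD k ∅ then 0 else 1

/-- Mismatch count of `s` against `g`, starting at offset `k`. -/
noncomputable def mism (g : List (Set α)) : ℕ → List α → ℕ
  | _, [] => 0
  | k, a :: s => hamInd g k a + mism g (k + 1) s

/-- Invariant family of state sets. -/
def hamA (g : List (Set α)) (d k m : ℕ) : Set (ℕ × ℕ) :=
  {p | p.2 = k ∧ p.1 + m ≤ d ∧ p.1 + p.2 ≤ g.length}

open scoped Classical in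
lemma natCard_subtype_fin (n : ℕ) (P : Fin n → Prop) :
    Nat.card {i // P i} = ∑ i : Fin n, if P i then 1 else 0 := by
  classical
  rw [Nat.card_eq_fintype_card, Fintype.card_subtype, Finset.card_filter]

lemma mism_eq_card (g : List (Set α)) :
    ∀ (s : List α) (k : ℕ),
      mism g k s = Nat.card {i : Fin s.length // s.get i ∉ g.getD (k + (i : ℕ)) ∅} := by
  classical
  intro s
  induction s with
  | nil => intro k; rw [natCard_subtype_fin]; simp [mism]
  | cons a s ih =>
    intro k
    rw [natCard_subtype_fin]
    show mism g k (a :: s)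
      = ∑ i : Fin (s.length + 1),
          @ite ℕ ((a :: s).get i ∉ g.getD (k + (i : ℕ)) ∅) (Classical.propDecidable _) 1 0
    rw [Fin.sum_univ_succ]
    have h0 : (@ite ℕ ((a :: s).get (0 : Fin (s.length + 1)) ∉
          g.getD (k + ((0 : Fin (s.length + 1)) : ℕ)) ∅) (Classical.propDecidable _) 1 0)
        = hamInd g k a := by
      show (@ite ℕ (a ∉ g.getD (k + 0) ∅) (Classical.propDecidable _) 1 0) = hamInd g k a
      unfold hamInd
      rw [Nat.add_zero]
      by_cases h : a ∈ g.getD k ∅ <;> simp [h]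
    have h1 : ∀ i : Fin s.length,
        (@ite ℕ ((a :: s).get i.succ ∉ g.getD (k + ((i.succ : Fin (s.length + 1)) : ℕ)) ∅)
            (Classical.propDecidable _) 1 0)
          = @ite ℕ (s.get i ∉ g.getD ((k + 1) + (i : ℕ)) ∅) (Classical.propDecidable _) 1 0 := by
      intro i
      have he : k + ((i.succ : Fin (s.length + 1)) : ℕ) = (k + 1) + (i : ℕ) := by
        simp [Fin.val_succ]; omega
      have hg : (a :: s).get i.succ = s.get i := rfl
      rw [he, hg]
    rw [h0, Finset.sum_congr rfl (fun i _ => h1 i), ← natCard_subtype_fin, ← ih (k + 1)]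
    rfl

lemma hamDist_eq_mism (s : List α) (g : List (Set α)) :
    hamDist s g = mism g 0 s := by
  rw [mism_eq_card]
  exact Nat.card_congr (Equiv.subtypeEquivRight fun i => by rw [Nat.zero_add])

lemma stepSet_hamA (g : List (Set α)) (d k m : ℕ) (a : α) :
    (hamNFA g d).stepSet (hamA g d k m) a = hamA g d (k + 1) (m + hamInd g k a) := by
  classical
  ext ⟨e, j⟩
  rw [NFA.mem_stepSet]
  constructor
  · rintro ⟨q, hq, hstep⟩
    obtain ⟨hq2, hqm, hqL⟩ := hq
    obtain ⟨hQ, hor⟩ := hstep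
    obtain ⟨hpd, hpk, hpL⟩ := hQ
    have hpL' : e + j ≤ g.length := hpL
    rcases hor with ⟨hmem, heq⟩ | ⟨hmem, hpos, heq⟩
    · have hmem' : a ∈ g.getD k ∅ := hq2 ▸ hmem
      have hi : hamInd g k a = 0 := by unfold hamInd; rw [if_pos hmem']
      have h1 : e = q.1 := congrArg Prod.fst heq
      have h2 : j = q.2 + 1 := congrArg Prod.snd heq
      exact ⟨by show j = k + 1; omega, by show e + (m + hamInd g k a) ≤ d; omega, hpL'⟩
    · have hmem' : a ∉ g.getD k ∅ := hq2 ▸ hmem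
      have hi : hamInd g k a = 1 := by unfold hamInd; rw [if_neg hmem']
      have h1 : e = q.1 - 1 := congrArg Prod.fst heq
      have h2 : j = q.2 + 1 := congrArg Prod.snd heq
      exact ⟨by show j = k + 1; omega, by show e + (m + hamInd g k a) ≤ d; omega, hpL'⟩
  · rintro ⟨hj, hm, hL⟩
    have hj' : j = k + 1 := hj
    have hm' : e + (m + hamInd g k a) ≤ d := hm
    have hL' : e + j ≤ g.length := hL
    subst hj'
    by_cases hmem : a ∈ g.getD k ∅
    · have hi : hamInd g k a = 0 := by unfold hamInd; rw [if_pos hmem]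
      refine ⟨(e, k), ⟨rfl, by omega, by show e + k ≤ g.length; omega⟩,
        ⟨⟨by show e ≤ d; omega, by show k + 1 ≤ g.length; omega, by show e + (k + 1) ≤ g.length; omega⟩,
          Or.inl ⟨hmem, rfl⟩⟩⟩
    · have hi : hamInd g k a = 1 := by unfold hamInd; rw [if_neg hmem]
      refine ⟨(e + 1, k), ⟨rfl, by show (e + 1) + m ≤ d; omega, by show (e + 1) + k ≤ g.length; omega⟩,
        ⟨⟨by show e ≤ d; omega, by show k + 1 ≤ g.length; omega, by show e + (k + 1) ≤ g.length; omega⟩,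
          Or.inr ⟨hmem, by show 0 < e + 1; omega, by show (e, k + 1) = (e + 1 - 1, k + 1); simp⟩⟩⟩

lemma evalFrom_hamA (g : List (Set α)) (d : ℕ) :
    ∀ (s : List α) (k m : ℕ),
      (hamNFA g d).evalFrom (hamA g d k m) s = hamA g d (k + s.length) (m + mism g k s) := by
  intro s
  induction s with
  | nil => intro k m; simp [NFA.evalFrom, mism]
  | cons a s ih =>
    intro k m
    show (hamNFA g d).evalFrom ((hamNFA g d).stepSet (hamA g d k m) a) s = _
    rw [stepSet_hamA, ih]
    have h1 : (k + 1) + s.length = k + (a :: s).length := by simp; omega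
    have h2 : (m + hamInd g k a) + mism g (k + 1) s = m + mism g k (a :: s) := by
      show _ = m + (hamInd g k a + mism g (k + 1) s); omega
    rw [h1, h2]

lemma start_hamA (g : List (Set α)) (d : ℕ) :
    (hamNFA g d).start = hamA g d 0 0 := by
  ext ⟨e, j⟩
  simp only [hamNFA, hamQ, hamA, Set.mem_setOf_eq, Set.mem_sep_iff]
  constructor
  · rintro ⟨⟨h1, h2, h3⟩, h4⟩; exact ⟨h4, by omega, h3⟩
  · rintro ⟨h1, h2, h3⟩; exact ⟨⟨by omega, by omega, h3⟩, h1⟩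

end Aux

/-- The Hamming-neighborhood NFA for `(g, d)` accepts exactly the strings of length
`|g|` whose Hamming distance to `g` is at most `d`. -/
theorem hamNFA_accepts {α : Type} (g : List (Set α)) (d : ℕ)
    (hne : ∀ S ∈ g, S.Nonempty) :
    ∀ s : List α, s ∈ (hamNFA g d).accepts ↔ s.length = g.length ∧ hamDist s g ≤ d := by
  intro s
  rw [NFA.mem_accepts, start_hamA]
  have hev := evalFrom_hamA g d s 0 0
  rw [hev]
  have hacc : (hamNFA g d).accept = {((0 : ℕ), g.length)} := rfl
  rw [hacc, hamDist_eq_mism]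
  constructor
  · rintro ⟨q, hq, hmem⟩
    rw [Set.mem_singleton_iff] at hq
    subst hq
    obtain ⟨h1, h2, h3⟩ := hmem
    simp only at h1 h2 h3
    exact ⟨by omega, by omega⟩
  · rintro ⟨h1, h2⟩
    exact ⟨(0, g.length), rfl, by
      refine ⟨by simp; omega, by simp; omega, by simp⟩⟩
end

section
/- For an NFA M and the automaton M_⟲ obtained by adding self-transitions on every character to all start states, a string s is accepted by M_⟲ if and only if some suffix of s is accepted by M. Consequently, if M accepts exactly the strings matching a pattern, M_⟲ accepts exactly the strings having a suffix matching the pattern. -/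
open List Set

lemma evalFrom_mono_aux {α σ : Type} (M N : NFA α σ)
    (hstep : ∀ q a, M.step q a ⊆ N.step q a) :
    ∀ (t : List α) (S T : Set σ), S ⊆ T → M.evalFrom S t ⊆ N.evalFrom T t := by
  intro t
  induction t with
  | nil => intro S T h; simpa using h
  | cons a t ih =>
    intro S T h
    show M.evalFrom (M.stepSet S a) t ⊆ N.evalFrom (N.stepSet T a) t
    apply ih
    intro q hq
    rcases (M.mem_stepSet).1 hq with ⟨p, hp, hq⟩
    exact (N.mem_stepSet).2 ⟨p, h hp, hstep p a hq⟩

lemma start_subset_loop_eval {α σ : Type} (M : NFA α σ) :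
    ∀ u : List α, M.start ⊆ (loopNFA M).eval u := by
  intro u
  induction u using List.reverseRecOn with
  | nil => simp [NFA.eval, loopNFA]
  | append_singleton u a ih =>
    rw [NFA.eval_append_singleton]
    intro p hp
    exact ((loopNFA M).mem_stepSet).2 ⟨p, ih hp, Or.inl ⟨rfl, hp⟩⟩

lemma loop_eval_subset {α σ : Type} (M : NFA α σ) :
    ∀ (s : List α) (q : σ), q ∈ (loopNFA M).eval s → ∃ t, t <:+ s ∧ q ∈ M.eval t := by
  intro s
  induction s using List.reverseRecOn with
  | nil => intro q hq; exact ⟨[], List.suffix_refl _, hq⟩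
  | append_singleton u a ih =>
    intro q hq
    rw [NFA.eval_append_singleton] at hq
    rcases ((loopNFA M).mem_stepSet).1 hq with ⟨p, hp, hstep⟩
    rcases hstep with ⟨rfl, hps⟩ | hstep
    · exact ⟨[], List.nil_suffix, hps⟩
    · rcases ih p hp with ⟨t, ht, hpe⟩
      obtain ⟨v, rfl⟩ := ht
      refine ⟨t ++ [a], ⟨v, by simp⟩, ?_⟩
      · rw [NFA.eval_append_singleton]
        exact (M.mem_stepSet).2 ⟨p, hpe, hstep⟩


/-- If no start state of `M` has an incoming transition from any state, then the
automaton obtained by adding self-transitions to all start states accepts a string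
`s` iff `M` accepts some suffix of `s`. -/
theorem loopNFA_accepts_iff_suffix {α σ : Type} (M : NFA α σ)
    (h : ∀ (q : σ) (a : α), ∀ p ∈ M.start, p ∉ M.step q a) :
    ∀ s : List α, s ∈ (loopNFA M).accepts ↔ ∃ t : List α, t <:+ s ∧ t ∈ M.accepts := by
  intro s
  rw [NFA.mem_accepts]
  constructor
  · rintro ⟨q, hqa, hqe⟩
    rcases loop_eval_subset M s q hqe with ⟨t, ht, hte⟩
    exact ⟨t, ht, M.mem_accepts.2 ⟨q, hqa, hte⟩⟩
  · rintro ⟨t, ⟨u, rfl⟩, hacc⟩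
    rcases M.mem_accepts.1 hacc with ⟨q, hqa, hqe⟩
    refine ⟨q, hqa, ?_⟩
    have : (loopNFA M).evalFrom M.start (u ++ t) =
        (loopNFA M).evalFrom ((loopNFA M).eval u) t := by
      simp [NFA.evalFrom, NFA.eval, List.foldl_append, loopNFA]
    show q ∈ (loopNFA M).evalFrom (loopNFA M).start (u ++ t)
    have hstart : (loopNFA M).start = M.start := rfl
    rw [hstart, this]
    exact evalFrom_mono_aux M (loopNFA M) (fun q a => Set.subset_union_right) t _ _
      (start_subset_loop_eval M u) hqe
end

section
/- If two NFA states p and q of a simple NFA both transition (on the same character σ) into sets of states containing a common state r, and within each level languages of distinct states are disjoint, then in the level-wise generalized-string NFA p = q; more generally, in any NFA where each state has at most one parent per character, for any two distinct states p, q in the same level and any string s, the sets of accepting runs from p and q on s are disjoint, hence L(p) ∩ L(q) = ∅ whenever the unique accepting-path property holds at the next level. -/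
open List Set

lemma evalFrom_union_eq {α σ : Type} (M : NFA α σ) (S : Set σ) (t : List α) :
    M.evalFrom S t = ⋃ r ∈ S, M.evalFrom {r} t := by
  induction t generalizing S with
  | nil => simp [NFA.evalFrom]
  | cons a t ih =>
    have h : ∀ T : Set σ, M.evalFrom T (a :: t) = M.evalFrom (M.stepSet T a) t := fun T => rfl
    have h2 : ∀ p : σ, M.evalFrom {p} (a :: t) = ⋃ r ∈ M.step p a, M.evalFrom {r} t := by
      intro p
      rw [h, ih]
      simp [NFA.stepSet]
    rw [h, ih]
    ext x
    simp only [Set.mem_iUnion, NFA.mem_stepSet, h2]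
    tauto

lemma stateLang_cons {α σ : Type} (M : NFA α σ) (p : σ) (a : α) (t : List α)
    (h : (a :: t) ∈ stateLang M p) : ∃ r ∈ M.step p a, t ∈ stateLang M r := by
  obtain ⟨x, hx, hacc⟩ := h
  have : M.evalFrom {p} (a :: t) = M.evalFrom (M.stepSet {p} a) t := rfl
  rw [this, evalFrom_union_eq] at hx
  simp only [Set.mem_iUnion] at hx
  obtain ⟨r, hr, hx⟩ := hx
  rw [NFA.mem_stepSet] at hr
  obtain ⟨p', hp', hr⟩ := hr
  cases hp'
  exact ⟨r, hr, x, hx, hacc⟩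

/-- In a level-organized NFA (every transition increases the level by one, single
accepting state), if each state of level `i + 1` has at most one parent per
character among the states of level `i`, and the languages of distinct states of
level `i + 1` are disjoint, then the languages of distinct states of level `i` are
disjoint. -/
theorem levelwise_disjoint_step {α σ : Type} (M : NFA α σ) (lvl : σ → ℕ)
    (ℓ i : ℕ) (f : σ)
    (hstep : ∀ (p : σ) (a : α), ∀ q ∈ M.step p a, lvl q = lvl p + 1)
    (haccept : M.accept = {f}) (hf : lvl f = ℓ)
    (ha : ∀ p q : σ, lvl p = i → lvl q = i → ∀ (a : α) (r : σ),
      r ∈ M.step p a → r ∈ M.step q a → p = q)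
    (hb : ∀ p q : σ, lvl p = i + 1 → lvl q = i + 1 → p ≠ q →
      Disjoint (stateLang M p) (stateLang M q)) :
    ∀ p q : σ, lvl p = i → lvl q = i → p ≠ q →
      Disjoint (stateLang M p) (stateLang M q) := by
  intro p q hp hq hpq
  rw [Set.disjoint_left]
  rintro s hs hs'
  cases s with
  | nil =>
    obtain ⟨x, hx, hacc⟩ := hs
    obtain ⟨y, hy, hacc'⟩ := hs'
    simp [NFA.evalFrom] at hx hy
    rw [haccept] at hacc hacc'
    subst hx hy
    exact hpq (hacc.trans hacc'.symm)
  | cons a t =>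
    obtain ⟨r, hr, hrt⟩ := stateLang_cons M p a t hs
    obtain ⟨r', hr', hrt'⟩ := stateLang_cons M q a t hs'
    have hrl : lvl r = i + 1 := by rw [hstep p a r hr, hp]
    have hrl' : lvl r' = i + 1 := by rw [hstep q a r' hr', hq]
    have : r = r' := by
      by_contra hne
      exact (Set.disjoint_left.mp (hb r r' hrl hrl' hne)) hrt hrt'
    subst this
    exact hpq (ha p q hp hq a r hr hr')
end
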